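/- Terminating very well-poised 5F4 summation: for a nonnegative integer N and complex a, b, d, Σ_{n=0}^{N} [(a)_n (1+a/2)_n (b)_n (d)_n (-N)_n] / [(a/2)_n (1+a-b)_n (1+a-d)_n (1+a+N)_n n!] = (1+a)_N (1+a-b-d)_N / ((1+a-b)_N (1+a-d)_N). -/

import Mathlib

set_option maxHeartbeats 1000000
open Finset
noncomputable def pr {F : Type*} [CommRing F] (x : F) (n : ℕ) : F := ∏ i ∈ Finset.range n, (x + i)
variable {F : Type*} [CommRing F]
@[simp] lemma pr_zero (x : F) : pr x 0 = 1 := by simp [pr]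
lemma pr_succ (x : F) (n : ℕ) : pr x (n+1) = pr x n * (x + n) := Finset.prod_range_succ _ _
lemma pr_congr {x y : F} (h : x = y) (n : ℕ) : pr x n = pr y n := by rw [h]
lemma pr_succ' (x : F) (n : ℕ) : pr x (n+1) = x * pr (x+1) n := by
  rw [pr, Finset.prod_range_succ']
  rw [mul_comm]
  congr 1
  · simp
  · refine Finset.prod_congr rfl fun i _ => ?_
    push_cast; ring
lemma pr_add (x : F) (m k : ℕ) : pr x (m + k) = pr x m * pr (x + m) k := by
  rw [pr, Finset.prod_range_add]
  congr 1
  refine Finset.prod_congr rfl fun i _ => ?_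
  push_cast; ring
lemma pr_factorial (n : ℕ) : pr (1 : F) n = n.factorial := by
  induction n with
  | zero => simp
  | succ n ih => rw [pr_succ, ih]; push_cast [Nat.factorial_succ]; ring
lemma pr_neg_nat (N : ℕ) : pr (-(N : F)) (N + 1) = 0 :=
  Finset.prod_eq_zero (Finset.self_mem_range_succ N) (by simp)
lemma pr_ne_zero {F : Type*} [Field F] {x : F} {n : ℕ} (h : ∀ i < n, x + (i : F) ≠ 0) : pr x n ≠ 0 :=
  Finset.prod_ne_zero_iff.2 fun i hi => h i (Finset.mem_range.1 hi)
lemma map_pr {F' : Type*} [CommRing F'] (f : F →+* F') (x : F) (n : ℕ) :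
    f (pr x n) = pr (f x) n := by simp [pr, map_prod]

variable {F2 : Type*} [Field F2]
variable {F : Type*} [Field F]

lemma scalar_RI {F : Type*} [Field F] (α b d M NN : F)
    (n2 : 2+2*α+NN+M ≠ 0) (n3 : α+(M+1) ≠ 0)
    (n4 : 1+2*α-b+(M+1) ≠ 0) (n5 : 1+2*α-d+(M+1) ≠ 0) (n6 : (2:F) ≠ 0) :
    -(NN+1)*((1+2*α-b+NN)*(1+2*α-d+NN))/(2+2*α+NN+M) - (-NN+M)*(1+2*α-b-d+NN)
    = (-NN+M)*((2*α+(M+1))*(b+(M+1))*(d+(M+1))*(((M+1+1)+2*α-b)*((M+1+1)+2*α-d))) /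
          (2*(α+(M+1))*(1+2*α-b+(M+1))*(1+2*α-d+(M+1))*(2+2*α+NN+M))
      - (M+1)*(((M+1)+2*α-b)*((M+1)+2*α-d))/(2*((M+1)+α)) := by
  have n3' : (M+1)+α ≠ 0 := by rw [show (M+1)+α = α+(M+1) by ring]; exact n3
  have q1 : 2*(α+(M+1))*(1+2*α-b+(M+1))*(1+2*α-d+(M+1))*(2+2*α+NN+M) ≠ 0 :=
    mul_ne_zero (mul_ne_zero (mul_ne_zero (mul_ne_zero n6 n3) n4) n5) n2
  have q2 : 2*((M+1)+α) ≠ 0 := mul_ne_zero n6 n3'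
  rw [div_sub' n2, div_sub_div _ _ q1 q2, div_eq_div_iff n2 (mul_ne_zero q1 q2)]
  ring

lemma star_core {F : Type*} [Field F] (α b d M NN Pa Ph Pb Pd Q Dα Db Dd U Fc : F)
    (nDα : Dα ≠ 0) (nDb : Db ≠ 0) (nDd : Dd ≠ 0) (nU : U ≠ 0) (nFc : Fc ≠ 0)
    (n1 : 1+2*α+NN ≠ 0) (n2 : 2+2*α+NN+M ≠ 0) (n3 : α+(M+1) ≠ 0) (n3' : 1+α+(M+1) ≠ 0)
    (n4 : 1+2*α-b+(M+1) ≠ 0) (n5 : 1+2*α-d+(M+1) ≠ 0) (n6 : (2:F) ≠ 0) (n7 : M+1+1 ≠ 0) :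
    Pa*Ph*Pb*Pd*(-(NN+1)*Q) / (Dα*Db*Dd*(U*(2+2*α+NN+M))*Fc) * ((1+2*α-b+NN)*(1+2*α-d+NN))
    - Pa*Ph*Pb*Pd*(Q*(-NN+M)) / (Dα*Db*Dd*((1+2*α+NN)*U)*Fc) * ((1+2*α+NN)*(1+2*α-b-d+NN))
    = (Pa*(2*α+(M+1)))*(Ph*(1+α+(M+1)))*(Pb*(b+(M+1)))*(Pd*(d+(M+1)))*(Q*(-NN+M))*((M+1+1)*(((M+1+1)+2*α-b)*((M+1+1)+2*α-d)))
        / (2*(1+α+(M+1))*(Dα*(α+(M+1)))*(Db*(1+2*α-b+(M+1)))*(Dd*(1+2*α-d+(M+1)))*(U*(2+2*α+NN+M))*((M+1+1)*Fc))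
      - Pa*Ph*Pb*Pd*Q*((M+1)*(((M+1)+2*α-b)*((M+1)+2*α-d))) / (2*((M+1)+α)*Dα*Db*Dd*U*Fc) := by
  have nΦ : Dα*Db*Dd*U*Fc ≠ 0 :=
    mul_ne_zero (mul_ne_zero (mul_ne_zero (mul_ne_zero nDα nDb) nDd) nU) nFc
  have nα1 : (M+1)+α ≠ 0 := by rw [show (M+1)+α = α+(M+1) by ring]; exact n3
  have h1 : Pa*Ph*Pb*Pd*(-(NN+1)*Q) / (Dα*Db*Dd*(U*(2+2*α+NN+M))*Fc) * ((1+2*α-b+NN)*(1+2*α-d+NN))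
      = Pa*Ph*Pb*Pd*Q/(Dα*Db*Dd*U*Fc) * (-(NN+1)*((1+2*α-b+NN)*(1+2*α-d+NN))/(2+2*α+NN+M)) := by
    rw [div_mul_eq_mul_div, div_mul_div_comm,
      div_eq_div_iff (mul_ne_zero (mul_ne_zero (mul_ne_zero (mul_ne_zero nDα nDb) nDd) (mul_ne_zero nU n2)) nFc) (mul_ne_zero nΦ n2)]
    generalize (1+2*α-b+NN : F) = x1
    generalize (1+2*α-d+NN : F) = x2
    generalize (2+2*α+NN+M : F) = s2
    generalize (-(NN+1) : F) = e1
    ring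
  have h2 : Pa*Ph*Pb*Pd*(Q*(-NN+M)) / (Dα*Db*Dd*((1+2*α+NN)*U)*Fc) * ((1+2*α+NN)*(1+2*α-b-d+NN))
      = Pa*Ph*Pb*Pd*Q/(Dα*Db*Dd*U*Fc) * ((-NN+M)*(1+2*α-b-d+NN)) := by
    rw [div_mul_eq_mul_div, div_mul_eq_mul_div,
      div_eq_div_iff (mul_ne_zero (mul_ne_zero (mul_ne_zero (mul_ne_zero nDα nDb) nDd) (mul_ne_zero n1 nU)) nFc) nΦ]
    generalize (1+2*α+NN : F) = s1
    generalize (1+2*α-b-d+NN : F) = yy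
    generalize (-NN+M : F) = e2
    ring
  have h3 : (Pa*(2*α+(M+1)))*(Ph*(1+α+(M+1)))*(Pb*(b+(M+1)))*(Pd*(d+(M+1)))*(Q*(-NN+M))*((M+1+1)*(((M+1+1)+2*α-b)*((M+1+1)+2*α-d)))
        / (2*(1+α+(M+1))*(Dα*(α+(M+1)))*(Db*(1+2*α-b+(M+1)))*(Dd*(1+2*α-d+(M+1)))*(U*(2+2*α+NN+M))*((M+1+1)*Fc))
      = Pa*Ph*Pb*Pd*Q/(Dα*Db*Dd*U*Fc) *
        ((-NN+M)*((2*α+(M+1))*(b+(M+1))*(d+(M+1))*(((M+1+1)+2*α-b)*((M+1+1)+2*α-d))) /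
          (2*(α+(M+1))*(1+2*α-b+(M+1))*(1+2*α-d+(M+1))*(2+2*α+NN+M))) := by
    have nden : 2*(1+α+(M+1))*(Dα*(α+(M+1)))*(Db*(1+2*α-b+(M+1)))*(Dd*(1+2*α-d+(M+1)))*(U*(2+2*α+NN+M))*((M+1+1)*Fc) ≠ 0 :=
      mul_ne_zero (mul_ne_zero (mul_ne_zero (mul_ne_zero (mul_ne_zero (mul_ne_zero n6 n3') (mul_ne_zero nDα n3)) (mul_ne_zero nDb n4)) (mul_ne_zero nDd n5)) (mul_ne_zero nU n2)) (mul_ne_zero n7 nFc)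
    have nden2 : 2*(α+(M+1))*(1+2*α-b+(M+1))*(1+2*α-d+(M+1))*(2+2*α+NN+M) ≠ 0 :=
      mul_ne_zero (mul_ne_zero (mul_ne_zero (mul_ne_zero n6 n3) n4) n5) n2
    rw [div_mul_div_comm, div_eq_div_iff nden (mul_ne_zero nΦ nden2)]
    generalize (2*α+(M+1) : F) = g1
    generalize (1+α+(M+1) : F) = g2
    generalize (b+(M+1) : F) = g3
    generalize (d+(M+1) : F) = g4
    generalize (-NN+M : F) = g5
    generalize ((M+1+1)+2*α-b : F) = g7
    generalize ((M+1+1)+2*α-d : F) = g8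
    generalize (α+(M+1) : F) = g9
    generalize (1+2*α-b+(M+1) : F) = g10
    generalize (1+2*α-d+(M+1) : F) = g11
    generalize (2+2*α+NN+M : F) = g12
    generalize (M+1+1 : F) = g6
    ring
  have h4 : Pa*Ph*Pb*Pd*Q*((M+1)*(((M+1)+2*α-b)*((M+1)+2*α-d))) / (2*((M+1)+α)*Dα*Db*Dd*U*Fc)
      = Pa*Ph*Pb*Pd*Q/(Dα*Db*Dd*U*Fc) * ((M+1)*(((M+1)+2*α-b)*((M+1)+2*α-d))/(2*((M+1)+α))) := by
    rw [div_mul_div_comm, div_eq_div_iff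
      (mul_ne_zero (mul_ne_zero (mul_ne_zero (mul_ne_zero (mul_ne_zero (mul_ne_zero n6 nα1) nDα) nDb) nDd) nU) nFc)
      (mul_ne_zero nΦ (mul_ne_zero n6 nα1))]
    generalize ((M+1)+2*α-b : F) = k1
    generalize ((M+1)+2*α-d : F) = k2
    generalize ((M+1)+α : F) = k3
    generalize (M+1 : F) = k4
    ring
  rw [h1, h2, h3, h4, ← mul_sub, ← mul_sub]
  exact congrArg _ (scalar_RI α b d M NN n2 n3 n4 n5 n6)

noncomputable def Tg {F : Type*} [Field F] (α b d : F) (Nv n : ℕ) : F :=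
  pr (2*α) n * pr (1+α) n * pr b n * pr d n * pr (-(Nv:F)) n /
    (pr α n * pr (1+2*α-b) n * pr (1+2*α-d) n * pr (1+2*α+(Nv:F)) n * (n.factorial : F))

noncomputable def Gg {F : Type*} [Field F] (α b d : F) (N : ℕ) : ℕ → F
  | 0 => 0
  | (m+1) =>
      pr (2*α) (m+1) * pr (1+α) (m+1) * pr b (m+1) * pr d (m+1) * pr (-(N:F)) m *
        (((m:F)+1) * ((((m:F)+1)+2*α-b) * (((m:F)+1)+2*α-d))) /
      (2 * (((m:F)+1)+α) * pr α (m+1) * pr (1+2*α-b) (m+1) * pr (1+2*α-d) (m+1) *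
        pr (2+2*α+(N:F)) m * ((m+1).factorial : F))


lemma star {F : Type*} [Field F] [CharZero F] (α b d : F) (N : ℕ)
    (hA : ∀ i : ℕ, i ≤ 2*N+2 → α + (i:F) ≠ 0)
    (hB : ∀ i : ℕ, i ≤ 2*N+2 → 1+2*α-b + (i:F) ≠ 0)
    (hD : ∀ i : ℕ, i ≤ 2*N+2 → 1+2*α-d + (i:F) ≠ 0)
    (hN : ∀ i : ℕ, i ≤ 2*N+2 → 1+2*α + (i:F) ≠ 0)
    (n : ℕ) (hn : n ≤ N+1) :
    Tg α b d (N+1) n * ((1+2*α-b+(N:F))*(1+2*α-d+(N:F)))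
      - Tg α b d N n * ((1+2*α+(N:F))*(1+2*α-b-d+(N:F)))
      = Gg α b d N (n+1) - Gg α b d N n := by
  match n, hn with
  | 0, _ =>
    have a0 : α ≠ 0 := by simpa using hA 0 (by omega)
    have a1 : 1+α ≠ 0 := by
      have := hA 1 (by omega); rw [show α+((1:ℕ):F) = 1+α by push_cast; ring] at this; exact this
    have b0 : 1+2*α-b ≠ 0 := by simpa using hB 0 (by omega)
    have d0 : 1+2*α-d ≠ 0 := by simpa using hD 0 (by omega)
    simp only [Tg, Gg, pr_zero, pr_succ, Nat.cast_zero, Nat.factorial_zero, Nat.factorial_one,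
      Nat.cast_one, zero_add, add_zero, mul_one, one_mul, mul_zero, zero_mul, sub_zero]
    rw [eq_div_iff
      (mul_ne_zero (mul_ne_zero (mul_ne_zero (mul_ne_zero two_ne_zero a1) a0) b0) d0)]
    ring
  | (m+1), hn =>
    have hm : m ≤ N := by omega
    have nDα : pr α (m+1) ≠ 0 := pr_ne_zero fun i hi => hA i (by omega)
    have nDb : pr (1+2*α-b) (m+1) ≠ 0 := pr_ne_zero fun i hi => hB i (by omega)
    have nDd : pr (1+2*α-d) (m+1) ≠ 0 := pr_ne_zero fun i hi => hD i (by omega)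
    have nU : pr (2+2*α+(N:F)) m ≠ 0 := pr_ne_zero fun i hi => by
      rw [show (2+2*α+(N:F)) + (i:F) = 1+2*α+((N+1+i : ℕ):F) by push_cast; ring]
      exact hN _ (by omega)
    have nFc : (((m+1).factorial : ℕ) : F) ≠ 0 := Nat.cast_ne_zero.2 (Nat.factorial_ne_zero _)
    have n1 : 1+2*α+(N:F) ≠ 0 := hN N (by omega)
    have n2 : 2+2*α+(N:F)+(m:F) ≠ 0 := by
      rw [show 2+2*α+(N:F)+(m:F) = 1+2*α+((N+1+m : ℕ):F) by push_cast; ring]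
      exact hN _ (by omega)
    have n3 : α+((m:F)+1) ≠ 0 := by
      rw [show α+((m:F)+1) = α+((m+1 : ℕ):F) by push_cast; ring]
      exact hA _ (by omega)
    have n3' : 1+α+((m:F)+1) ≠ 0 := by
      rw [show 1+α+((m:F)+1) = α+((m+2 : ℕ):F) by push_cast; ring]
      exact hA _ (by omega)
    have n4 : 1+2*α-b+((m:F)+1) ≠ 0 := by
      rw [show 1+2*α-b+((m:F)+1) = 1+2*α-b+((m+1 : ℕ):F) by push_cast; ring]
      exact hB _ (by omega)
    have n5 : 1+2*α-d+((m:F)+1) ≠ 0 := by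
      rw [show 1+2*α-d+((m:F)+1) = 1+2*α-d+((m+1 : ℕ):F) by push_cast; ring]
      exact hD _ (by omega)
    have n6 : (2:F) ≠ 0 := two_ne_zero
    have n7 : (m:F)+1+1 ≠ 0 := by
      rw [show (m:F)+1+1 = ((m+2 : ℕ):F) by push_cast; ring]
      exact Nat.cast_ne_zero.2 (by omega)
    have r1 : pr (-((N+1 : ℕ) : F)) (m+1) = -((N:F)+1) * pr (-(N:F)) m := by
      rw [pr_succ', pr_congr (show (-((N+1:ℕ):F))+1 = -(N:F) by push_cast; ring)]
      push_cast; ring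
    have r2 : pr (1+2*α+((N+1:ℕ):F)) (m+1) = pr (2+2*α+(N:F)) m * (2+2*α+(N:F)+(m:F)) := by
      rw [pr_congr (show (1+2*α+((N+1:ℕ):F)) = (2+2*α+(N:F)) by push_cast; ring), pr_succ]
    have r4 : pr (1+2*α+(N:F)) (m+1) = (1+2*α+(N:F)) * pr (2+2*α+(N:F)) m := by
      rw [pr_succ', pr_congr (show 1+2*α+(N:F)+1 = 2+2*α+(N:F) by ring)]
    simp only [Tg, Gg]
    rw [r1, r2, r4, Nat.factorial_succ (m+1)]
    rw [pr_succ (2*α) (m+1), pr_succ (1+α) (m+1), pr_succ b (m+1), pr_succ d (m+1),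
      pr_succ α (m+1), pr_succ (1+2*α-b) (m+1), pr_succ (1+2*α-d) (m+1),
      pr_succ (-(N:F)) m, pr_succ (2+2*α+(N:F)) m]
    push_cast
    rw [show ((m:F)+1+1)+α = 1+α+((m:F)+1) by ring]
    exact star_core α b d (m:F) (N:F) _ _ _ _ _ _ _ _ _ _
      nDα nDb nDd nU nFc n1 n2 n3 n3' n4 n5 n6 n7

lemma Tg_top_zero {F : Type*} [Field F] (α b d : F) (N : ℕ) : Tg α b d N (N+1) = 0 := by
  simp [Tg, pr_neg_nat]

lemma Gg_top_zero {F : Type*} [Field F] (α b d : F) (N : ℕ) : Gg α b d N (N+1+1) = 0 := by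
  simp [Gg, pr_neg_nat]

lemma gen {F : Type*} [Field F] [CharZero F] (α b d : F) : ∀ N : ℕ,
    (∀ i ≤ 2*N+2, α + (i:F) ≠ 0) → (∀ i ≤ 2*N+2, 1+2*α-b+(i:F) ≠ 0) →
    (∀ i ≤ 2*N+2, 1+2*α-d+(i:F) ≠ 0) → (∀ i ≤ 2*N+2, 1+2*α+(i:F) ≠ 0) →
    ∑ n ∈ Finset.range (N+1), Tg α b d N n
      = pr (1+2*α) N * pr (1+2*α-b-d) N / (pr (1+2*α-b) N * pr (1+2*α-d) N)
  | 0, _, _, _, _ => by simp [Tg]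
  | (N+1), hA, hB, hD, hN => by
    have hA' : ∀ i ≤ 2*N+2, α + (i:F) ≠ 0 := fun i hi => hA i (by omega)
    have hB' : ∀ i ≤ 2*N+2, 1+2*α-b+(i:F) ≠ 0 := fun i hi => hB i (by omega)
    have hD' : ∀ i ≤ 2*N+2, 1+2*α-d+(i:F) ≠ 0 := fun i hi => hD i (by omega)
    have hN' : ∀ i ≤ 2*N+2, 1+2*α+(i:F) ≠ 0 := fun i hi => hN i (by omega)
    have ih := gen α b d N hA' hB' hD' hN'
    have hXb : (1+2*α-b+(N:F)) ≠ 0 := hB N (by omega)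
    have hXd : (1+2*α-d+(N:F)) ≠ 0 := hD N (by omega)
    have nb1 : pr (1+2*α-b) (N+1) ≠ 0 := pr_ne_zero fun i hi => hB i (by omega)
    have nd1 : pr (1+2*α-d) (N+1) ≠ 0 := pr_ne_zero fun i hi => hD i (by omega)
    have nbN : pr (1+2*α-b) N ≠ 0 := pr_ne_zero fun i hi => hB i (by omega)
    have ndN : pr (1+2*α-d) N ≠ 0 := pr_ne_zero fun i hi => hD i (by omega)
    have key : (∑ n ∈ Finset.range (N+1+1), Tg α b d (N+1) n) * ((1+2*α-b+(N:F))*(1+2*α-d+(N:F)))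
        - (∑ n ∈ Finset.range (N+1+1), Tg α b d N n) * ((1+2*α+(N:F))*(1+2*α-b-d+(N:F))) = 0 := by
      rw [Finset.sum_mul, Finset.sum_mul, ← Finset.sum_sub_distrib,
        Finset.sum_congr rfl (fun n hn => star α b d N hA' hB' hD' hN' n
          (by have := Finset.mem_range.1 hn; omega)),
        Finset.sum_range_sub (Gg α b d N), Gg_top_zero]
      simp [Gg]
    have hT : ∑ n ∈ Finset.range (N+1+1), Tg α b d N n = ∑ n ∈ Finset.range (N+1), Tg α b d N n := by
      rw [Finset.sum_range_succ, Tg_top_zero, add_zero]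
    rw [hT, ih] at key
    have rhsrec : pr (1+2*α) (N+1) * pr (1+2*α-b-d) (N+1) / (pr (1+2*α-b) (N+1) * pr (1+2*α-d) (N+1))
          * ((1+2*α-b+(N:F))*(1+2*α-d+(N:F)))
        = pr (1+2*α) N * pr (1+2*α-b-d) N / (pr (1+2*α-b) N * pr (1+2*α-d) N)
          * ((1+2*α+(N:F))*(1+2*α-b-d+(N:F))) := by
      rw [pr_succ (1+2*α) N, pr_succ (1+2*α-b-d) N, pr_succ (1+2*α-b) N, pr_succ (1+2*α-d) N,
        div_mul_eq_mul_div, div_mul_eq_mul_div,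
        div_eq_div_iff (mul_ne_zero (mul_ne_zero nbN hXb) (mul_ne_zero ndN hXd))
          (mul_ne_zero nbN ndN)]
      generalize (1+2*α+(N:F) : F) = t1
      generalize (1+2*α-b-d+(N:F) : F) = t2
      generalize (1+2*α-b+(N:F) : F) = t3
      generalize (1+2*α-d+(N:F) : F) = t4
      ring
    apply mul_right_cancel₀ (mul_ne_zero hXb hXd)
    rw [rhsrec]
    linear_combination key

noncomputable def lhsC {F : Type*} [CommRing F] (α b d : F) (N : ℕ) : F :=
  ∑ n ∈ Finset.range (N+1),
    pr (2*α) n * pr (1+α) n * pr b n * pr d n * pr (-(N:F)) n *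
      (pr (α+(n:F)) (N-n) * pr (1+2*α-b+(n:F)) (N-n) * pr (1+2*α-d+(n:F)) (N-n) *
        pr (1+2*α+(N:F)+(n:F)) (N-n) * pr ((n:F)+1) (N-n))

noncomputable def rhsC {F : Type*} [CommRing F] (α b d : F) (N : ℕ) : F :=
  pr (1+2*α) N * pr (1+2*α-b-d) N * (pr α N * pr (1+2*α+(N:F)) N * pr (1:F) N)

lemma gen_cleared {F : Type*} [Field F] [CharZero F] (α b d : F) (N : ℕ)
    (hA : ∀ i ≤ 2*N+2, α + (i:F) ≠ 0) (hB : ∀ i ≤ 2*N+2, 1+2*α-b+(i:F) ≠ 0)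
    (hD : ∀ i ≤ 2*N+2, 1+2*α-d+(i:F) ≠ 0) (hN : ∀ i ≤ 2*N+2, 1+2*α+(i:F) ≠ 0) :
    lhsC α b d N = rhsC α b d N := by
  have nα : pr α N ≠ 0 := pr_ne_zero fun i hi => hA i (by omega)
  have nb : pr (1+2*α-b) N ≠ 0 := pr_ne_zero fun i hi => hB i (by omega)
  have nd : pr (1+2*α-d) N ≠ 0 := pr_ne_zero fun i hi => hD i (by omega)
  have nN : pr (1+2*α+(N:F)) N ≠ 0 := pr_ne_zero fun i hi => by
    rw [show (1+2*α+(N:F)) + (i:F) = 1+2*α+((N+i : ℕ):F) by push_cast; ring]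
    exact hN _ (by omega)
  have nfac : ((N.factorial : ℕ) : F) ≠ 0 := Nat.cast_ne_zero.2 (Nat.factorial_ne_zero _)
  have hD0 : pr α N * pr (1+2*α-b) N * pr (1+2*α-d) N * pr (1+2*α+(N:F)) N * ((N.factorial : ℕ) : F) ≠ 0 :=
    mul_ne_zero (mul_ne_zero (mul_ne_zero (mul_ne_zero nα nb) nd) nN) nfac
  have term : ∀ n ∈ Finset.range (N+1),
      pr (2*α) n * pr (1+α) n * pr b n * pr d n * pr (-(N:F)) n *
        (pr (α+(n:F)) (N-n) * pr (1+2*α-b+(n:F)) (N-n) * pr (1+2*α-d+(n:F)) (N-n) *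
          pr (1+2*α+(N:F)+(n:F)) (N-n) * pr ((n:F)+1) (N-n))
      = Tg α b d N n *
        (pr α N * pr (1+2*α-b) N * pr (1+2*α-d) N * pr (1+2*α+(N:F)) N * ((N.factorial : ℕ) : F)) := by
    intro n hn
    have hnN : n ≤ N := by have := Finset.mem_range.1 hn; omega
    have hsum : n + (N - n) = N := by omega
    have e1 : pr α N = pr α n * pr (α+(n:F)) (N-n) := by
      have h := pr_add α n (N-n); rwa [hsum] at h
    have e2 : pr (1+2*α-b) N = pr (1+2*α-b) n * pr (1+2*α-b+(n:F)) (N-n) := by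
      have h := pr_add (1+2*α-b) n (N-n); rwa [hsum] at h
    have e3 : pr (1+2*α-d) N = pr (1+2*α-d) n * pr (1+2*α-d+(n:F)) (N-n) := by
      have h := pr_add (1+2*α-d) n (N-n); rwa [hsum] at h
    have e4 : pr (1+2*α+(N:F)) N = pr (1+2*α+(N:F)) n * pr (1+2*α+(N:F)+(n:F)) (N-n) := by
      have h := pr_add (1+2*α+(N:F)) n (N-n); rwa [hsum] at h
    have e5 : ((N.factorial : ℕ) : F) = ((n.factorial : ℕ) : F) * pr ((n:F)+1) (N-n) := by
      have h := pr_add (1:F) n (N-n)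
      rw [hsum] at h
      simp only [pr_factorial] at h
      rw [pr_congr (show (1:F)+(n:F) = (n:F)+1 by ring)] at h
      exact h
    have hden : pr α n * pr (1+2*α-b) n * pr (1+2*α-d) n * pr (1+2*α+(N:F)) n * ((n.factorial : ℕ) : F) ≠ 0 := by
      refine mul_ne_zero (mul_ne_zero (mul_ne_zero (mul_ne_zero ?_ ?_) ?_) ?_) ?_
      · exact pr_ne_zero fun i hi => hA i (by omega)
      · exact pr_ne_zero fun i hi => hB i (by omega)
      · exact pr_ne_zero fun i hi => hD i (by omega)
      · exact pr_ne_zero fun i hi => by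
          rw [show (1+2*α+(N:F)) + (i:F) = 1+2*α+((N+i : ℕ):F) by push_cast; ring]
          exact hN _ (by omega)
      · exact Nat.cast_ne_zero.2 (Nat.factorial_ne_zero _)
    rw [Tg, div_mul_eq_mul_div, eq_div_iff hden, e1, e2, e3, e4, e5]
    ring
  rw [lhsC, Finset.sum_congr rfl term, ← Finset.sum_mul,
    gen α b d N hA hB hD hN, rhsC, div_mul_eq_mul_div, div_eq_iff (mul_ne_zero nb nd),
    ← pr_factorial]
  ring

lemma map_lhsC {F F' : Type*} [CommRing F] [CommRing F'] (f : F →+* F') (α b d : F) (N : ℕ) :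
    f (lhsC α b d N) = lhsC (f α) (f b) (f d) N := by
  simp [lhsC, map_sum, map_pr, map_ofNat]

lemma map_rhsC {F F' : Type*} [CommRing F] [CommRing F'] (f : F →+* F') (α b d : F) (N : ℕ) :
    f (rhsC α b d N) = rhsC (f α) (f b) (f d) N := by
  simp [rhsC, map_pr, map_ofNat]

open MvPolynomial in
lemma cleared_complex (a b d : ℂ) (N : ℕ) :
    lhsC (a/2) b d N = rhsC (a/2) b d N := by
  classical
  let Rp := MvPolynomial (Fin 3) ℂ
  let K := FractionRing Rp
  haveI : CharZero Rp := charZero_of_injective_algebraMap (C_injective (Fin 3) ℂ)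
  haveI : CharZero K := charZero_of_injective_algebraMap (IsFractionRing.injective Rp K)
  let φ : Rp →+* K := algebraMap Rp K
  have hinj : Function.Injective φ := IsFractionRing.injective Rp K
  let pt : Fin 3 → ℂ := ![1, -1, -1]
  have poly_ne : ∀ p : Rp, MvPolynomial.eval pt p ≠ 0 → φ p ≠ 0 := by
    intro p hp h0
    apply hp
    have hp0 : p = 0 := hinj (by simpa using h0)
    simp [hp0]
  set αK : K := φ (X 0) with hαK
  set bK : K := φ (X 1) with hbK
  set dK : K := φ (X 2) with hdK
  have hA : ∀ i : ℕ, i ≤ 2*N+2 → αK + (i:K) ≠ 0 := by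
    intro i _
    have e : αK + (i:K) = φ (X 0 + (i : Rp)) := by simp [hαK, map_add, map_natCast]
    rw [e]
    apply poly_ne
    rw [show MvPolynomial.eval pt (X 0 + (i : Rp)) = 1 + (i:ℂ) by simp [pt]]
    rw [show (1:ℂ) + (i:ℂ) = ((1+i : ℕ) : ℂ) by push_cast; ring]
    exact Nat.cast_ne_zero.2 (by omega)
  have hB : ∀ i : ℕ, i ≤ 2*N+2 → 1+2*αK-bK+(i:K) ≠ 0 := by
    intro i _
    have e : 1+2*αK-bK+(i:K) = φ (1+2*(X 0)-(X 1)+(i : Rp)) := by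
      simp [hαK, hbK, map_add, map_sub, map_mul, map_natCast, map_one, map_ofNat]
    rw [e]
    apply poly_ne
    rw [show MvPolynomial.eval pt (1+2*(X 0)-(X 1)+(i : Rp)) = 4 + (i:ℂ) by
      simp [pt]; norm_num]
    rw [show (4:ℂ) + (i:ℂ) = ((4+i : ℕ) : ℂ) by push_cast; ring]
    exact Nat.cast_ne_zero.2 (by omega)
  have hDh : ∀ i : ℕ, i ≤ 2*N+2 → 1+2*αK-dK+(i:K) ≠ 0 := by
    intro i _
    have e : 1+2*αK-dK+(i:K) = φ (1+2*(X 0)-(X 2)+(i : Rp)) := by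
      simp [hαK, hdK, map_add, map_sub, map_mul, map_natCast, map_one, map_ofNat]
    rw [e]
    apply poly_ne
    rw [show MvPolynomial.eval pt (1+2*(X 0)-(X 2)+(i : Rp)) = 4 + (i:ℂ) by
      simp [pt]; norm_num]
    rw [show (4:ℂ) + (i:ℂ) = ((4+i : ℕ) : ℂ) by push_cast; ring]
    exact Nat.cast_ne_zero.2 (by omega)
  have hNh : ∀ i : ℕ, i ≤ 2*N+2 → 1+2*αK+(i:K) ≠ 0 := by
    intro i _
    have e : 1+2*αK+(i:K) = φ (1+2*(X 0)+(i : Rp)) := by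
      simp [hαK, map_add, map_mul, map_natCast, map_one, map_ofNat]
    rw [e]
    apply poly_ne
    rw [show MvPolynomial.eval pt (1+2*(X 0)+(i : Rp)) = 3 + (i:ℂ) by
      simp [pt]; norm_num]
    rw [show (3:ℂ) + (i:ℂ) = ((3+i : ℕ) : ℂ) by push_cast; ring]
    exact Nat.cast_ne_zero.2 (by omega)
  have hK := gen_cleared αK bK dK N hA hB hDh hNh
  rw [hαK, hbK, hdK, ← map_lhsC φ, ← map_rhsC φ] at hK
  have hRp : lhsC (X 0 : Rp) (X 1) (X 2) N = rhsC (X 0 : Rp) (X 1) (X 2) N := hinj hK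
  let g : Fin 3 → ℂ := ![a/2, b, d]
  let ψ : Rp →+* ℂ := MvPolynomial.eval₂Hom (RingHom.id ℂ) g
  have := congrArg ψ hRp
  rw [map_lhsC ψ, map_rhsC ψ] at this
  have hx0 : ψ (X 0) = a/2 := by
    rw [show ψ (X 0) = g 0 from MvPolynomial.eval₂Hom_X' _ _ _]; rfl
  have hx1 : ψ (X 1) = b := by
    rw [show ψ (X 1) = g 1 from MvPolynomial.eval₂Hom_X' _ _ _]; rfl
  have hx2 : ψ (X 2) = d := by
    rw [show ψ (X 2) = g 2 from MvPolynomial.eval₂Hom_X' _ _ _]; rfl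
  rw [hx0, hx1, hx2] at this
  exact this

/-- Pochhammer symbol (rising factorial) for complex numbers. -/
noncomputable def ph (x : ℂ) (n : ℕ) : ℂ := ∏ i ∈ Finset.range n, (x + i)

lemma ph_eq_pr : ph = pr := rfl

/-- Terminating very well-poised ₅F₄(1) summation. -/
theorem vwp_5F4_summation (N : ℕ) (a b d : ℂ)
    (h1 : ∀ n ≤ N, ph (a / 2) n ≠ 0)
    (h2 : ∀ n ≤ N, ph (1 + a - b) n ≠ 0)
    (h3 : ∀ n ≤ N, ph (1 + a - d) n ≠ 0)
    (h4 : ∀ n ≤ N, ph (1 + a + (N : ℂ)) n ≠ 0)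
    (h5 : ph (1 + a - b) N ≠ 0) (h6 : ph (1 + a - d) N ≠ 0) :
    ∑ n ∈ Finset.range (N + 1),
        ph a n * ph (1 + a / 2) n * ph b n * ph d n * ph (-(N : ℂ)) n /
          (ph (a / 2) n * ph (1 + a - b) n * ph (1 + a - d) n *
            ph (1 + a + (N : ℂ)) n * (n.factorial : ℂ)) =
      ph (1 + a) N * ph (1 + a - b - d) N / (ph (1 + a - b) N * ph (1 + a - d) N) := by
  rw [ph_eq_pr] at h1 h2 h3 h4 h5 h6
  rw [ph_eq_pr]
  have key := cleared_complex a b d N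
  simp only [lhsC, rhsC] at key
  simp only [show (2 : ℂ)*(a/2) = a from by ring] at key
  have hfacN : ((N.factorial : ℕ) : ℂ) ≠ 0 := Nat.cast_ne_zero.2 (Nat.factorial_ne_zero _)
  have hDne : pr (a/2) N * pr (1+a-b) N * pr (1+a-d) N * pr (1+a+(N:ℂ)) N * ((N.factorial : ℕ) : ℂ) ≠ 0 :=
    mul_ne_zero (mul_ne_zero (mul_ne_zero (mul_ne_zero (h1 N le_rfl) (h2 N le_rfl)) (h3 N le_rfl)) (h4 N le_rfl)) hfacN
  have term : ∀ n ∈ Finset.range (N+1),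
      pr a n * pr (1 + a / 2) n * pr b n * pr d n * pr (-(N : ℂ)) n /
          (pr (a / 2) n * pr (1 + a - b) n * pr (1 + a - d) n *
            pr (1 + a + (N : ℂ)) n * (n.factorial : ℂ))
      = pr a n * pr (1+a/2) n * pr b n * pr d n * pr (-(N:ℂ)) n *
          (pr (a/2+(n:ℂ)) (N-n) * pr (1+a-b+(n:ℂ)) (N-n) * pr (1+a-d+(n:ℂ)) (N-n) *
            pr (1+a+(N:ℂ)+(n:ℂ)) (N-n) * pr ((n:ℂ)+1) (N-n)) /
          (pr (a/2) N * pr (1+a-b) N * pr (1+a-d) N * pr (1+a+(N:ℂ)) N * ((N.factorial : ℕ) : ℂ)) := by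
    intro n hn
    have hnN : n ≤ N := by have := Finset.mem_range.1 hn; omega
    have hsum : n + (N - n) = N := by omega
    have e1 : pr (a/2) N = pr (a/2) n * pr (a/2+(n:ℂ)) (N-n) := by
      have h := pr_add (a/2) n (N-n); rwa [hsum] at h
    have e2 : pr (1+a-b) N = pr (1+a-b) n * pr (1+a-b+(n:ℂ)) (N-n) := by
      have h := pr_add (1+a-b) n (N-n); rwa [hsum] at h
    have e3 : pr (1+a-d) N = pr (1+a-d) n * pr (1+a-d+(n:ℂ)) (N-n) := by
      have h := pr_add (1+a-d) n (N-n); rwa [hsum] at h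
    have e4 : pr (1+a+(N:ℂ)) N = pr (1+a+(N:ℂ)) n * pr (1+a+(N:ℂ)+(n:ℂ)) (N-n) := by
      have h := pr_add (1+a+(N:ℂ)) n (N-n); rwa [hsum] at h
    have e5 : ((N.factorial : ℕ) : ℂ) = ((n.factorial : ℕ) : ℂ) * pr ((n:ℂ)+1) (N-n) := by
      have h := pr_add (1:ℂ) n (N-n)
      rw [hsum] at h
      simp only [pr_factorial] at h
      rw [pr_congr (show (1:ℂ)+(n:ℂ) = (n:ℂ)+1 by ring)] at h
      exact h
    have hP1 : pr (a/2) n * pr (1+a-b) n * pr (1+a-d) n * pr (1+a+(N:ℂ)) n * ((n.factorial : ℕ) : ℂ) ≠ 0 :=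
      mul_ne_zero (mul_ne_zero (mul_ne_zero (mul_ne_zero (h1 n hnN) (h2 n hnN)) (h3 n hnN)) (h4 n hnN))
        (Nat.cast_ne_zero.2 (Nat.factorial_ne_zero _))
    rw [div_eq_div_iff hP1 hDne, e1, e2, e3, e4, e5]
    ring
  rw [Finset.sum_congr rfl term, ← Finset.sum_div, key, pr_factorial,
    div_eq_div_iff hDne (mul_ne_zero h5 h6)]
  ring
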